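/- Let 0 < |λ| < 1 and consider the vector field F₈(x,y,z) = (λz² − (λ+1)yz, λxy + (1−λ)xz, xz) on ℝ³. On the half-space H⁺ = {z > 0}, the function f(x,y,z) = (y−z)·z^{−λ} is a first integral: along any solution with z(t) > 0, d/dt [(y(t)−z(t))·z(t)^{−λ}] = 0. -/

import Mathlib

/-- The geodesic field `F₈` of `Q₈` on `h(λ)`: `(λz² − (λ+1)yz, λxy + (1−λ)xz, xz)`. -/
def F8h (l : ℝ) (v : Fin 3 → ℝ) : Fin 3 → ℝ :=
  ![l * (v 2) ^ 2 - (l + 1) * v 1 * v 2, l * v 0 * v 1 + (1 - l) * v 0 * v 2, v 0 * v 2]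

/-- For `0 < |λ| < 1`, on `{z > 0}` the function `f = (y−z)·z^{−λ}` is a
first integral of `F₈`: its derivative along any solution with `z > 0` vanishes. -/
theorem stmt_11 (l : ℝ) (h1 : 0 < |l|) (h2 : |l| < 1) (γ : ℝ → Fin 3 → ℝ) (t : ℝ)
    (hz : 0 < γ t 2) (hγ : HasDerivAt γ (F8h l (γ t)) t) :
    HasDerivAt (fun u => (γ u 1 - γ u 2) * (γ u 2) ^ (-l : ℝ)) 0 t := by
  set x := γ t 0
  set y := γ t 1
  set z := γ t 2
  have h := hasDerivAt_pi.1 hγ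
  have hy : HasDerivAt (fun u => γ u 1) (l * x * y + (1 - l) * x * z) t := by
    simpa [F8h] using h 1
  have hzd : HasDerivAt (fun u => γ u 2) (x * z) t := by
    simpa [F8h] using h 2
  have hpow : HasDerivAt (fun u => (γ u 2) ^ (-l : ℝ))
      ((-l) * z ^ ((-l : ℝ) - 1) * (x * z)) t := by
    have := hzd.rpow_const (p := -l) (Or.inl (ne_of_gt hz))
    convert this using 1
    ring
  have := ((hy.sub hzd).mul hpow)
  have key : ((l * x * y + (1 - l) * x * z) - x * z) * z ^ (-l : ℝ) +
      (y - z) * ((-l) * z ^ ((-l : ℝ) - 1) * (x * z)) = 0 := by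
    have hz' : z ^ ((-l : ℝ) - 1) * z = z ^ (-l : ℝ) := by
      rw [← Real.rpow_add_one (ne_of_gt hz)]
      norm_num
    have h1 : (y - z) * ((-l) * z ^ ((-l : ℝ) - 1) * (x * z)) =
        -(l * x * (y - z) * z ^ (-l : ℝ)) := by
      rw [show (-l) * z ^ ((-l : ℝ) - 1) * (x * z) = (-l) * x * (z ^ ((-l : ℝ) - 1) * z) by ring,
        hz']
      ring
    rw [h1]
    ring
  convert this using 1
  · rfl
  · rfl
  · rfl
  exact key.symm
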